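/- Profile 2-approximation of the k-core decomposition: let B = (∅ = B_0 ⊊ ⋯ ⊊ B_k = V) be the chain of locally-dense subgraphs and C = (∅ = C_0 ⊊ ⋯ ⊊ C_l = V) the chain of all k-cores of G. Then for every index i with 1 ≤ i ≤ |V|, prof(i; C) ≥ prof(i; B)/2. -/

import Mathlib

open Finset

variable {V : Type*}

/-- Edges of `G` with both endpoints in `X`. -/
def innerEdges [Fintype V] [DecidableEq V] (G : SimpleGraph V) [DecidableRel G.Adj]
    (X : Finset V) : Finset (Sym2 V) :=
  G.edgeFinset.filter (fun e => ∀ v ∈ e, v ∈ X)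

/-- Marginal edges `Ẽ(X,Y) = E(X) ∪ E(X,Y)` (for disjoint `X`, `Y`):
edges with both endpoints in `X ∪ Y`, at least one in `X`. -/
def margEdges [Fintype V] [DecidableEq V] (G : SimpleGraph V) [DecidableRel G.Adj]
    (X Y : Finset V) : Finset (Sym2 V) :=
  G.edgeFinset.filter (fun e => (∀ v ∈ e, v ∈ X ∪ Y) ∧ ∃ v ∈ e, v ∈ X)

/-- Outer density `d(X,Y) = |Ẽ(X \ Y, Y)| / |X \ Y|`. -/
def outDensity [Fintype V] [DecidableEq V] (G : SimpleGraph V) [DecidableRel G.Adj]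
    (X Y : Finset V) : ℚ :=
  ((margEdges G (X \ Y) Y).card : ℚ) / ((X \ Y).card : ℚ)

/-- `W` is locally dense: there is no nonempty `X ⊆ W` and nonempty `Y` with `Y ∩ W = ∅`
such that `d(X, W \ X) ≤ d(Y, W)`. -/
def LocallyDense [Fintype V] [DecidableEq V] (G : SimpleGraph V) [DecidableRel G.Adj]
    (W : Finset V) : Prop :=
  ¬ ∃ X Y : Finset V, X.Nonempty ∧ Y.Nonempty ∧ X ⊆ W ∧ Y ∩ W = ∅ ∧
      outDensity G X (W \ X) ≤ outDensity G Y W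

/-- Number of neighbors of `x` in `U`. -/
def degIn [DecidableEq V] (G : SimpleGraph V) [DecidableRel G.Adj] (x : V) (U : Finset V) : ℕ :=
  (U.filter (G.Adj x)).card

/-- `C` is the `k`-core of `G`: every vertex of `C` has at least `k` neighbors in `C`,
and `C` contains every set with this minimum-degree property. -/
def IsKCore [DecidableEq V] (G : SimpleGraph V) [DecidableRel G.Adj]
    (k : ℕ) (C : Finset V) : Prop :=
  (∀ v ∈ C, k ≤ degIn G v C) ∧ ∀ D : Finset V, (∀ v ∈ D, k ≤ degIn G v D) → D ⊆ C

set_option linter.unusedSectionVars false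
set_option linter.unusedVariables false

section Lemmas
variable [Fintype V] [DecidableEq V] (G : SimpleGraph V) [DecidableRel G.Adj]

lemma mem_margEdges {A Y : Finset V} {e : Sym2 V} :
    e ∈ margEdges G A Y ↔ e ∈ G.edgeFinset ∧ (∀ v ∈ e, v ∈ A ∪ Y) ∧ ∃ v ∈ e, v ∈ A := by
  simp [margEdges]

lemma margEdges_empty_left (Y : Finset V) : margEdges G ∅ Y = ∅ := by
  ext e; simp [mem_margEdges]

lemma degIn_mono {x : V} {U W : Finset V} (h : U ⊆ W) : degIn G x U ≤ degIn G x W :=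
  card_le_card (filter_subset_filter _ h)

lemma margEdges_mono_right {A U W : Finset V} (h : U ⊆ W) :
    margEdges G A U ⊆ margEdges G A W := by
  intro e he
  rw [mem_margEdges] at he ⊢
  exact ⟨he.1, fun v hv => (union_subset_union_right h) (he.2.1 v hv), he.2.2⟩

lemma margEdges_mono_left {A B P : Finset V} (h : A ⊆ B) :
    margEdges G A P ⊆ margEdges G B P := by
  intro e he
  rw [mem_margEdges] at he ⊢
  obtain ⟨h1, h2, v, hv, hvA⟩ := he
  exact ⟨h1, fun w hw => (union_subset_union_left h) (h2 w hw), v, hv, h hvA⟩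

lemma margEdges_filter_card {A Y : Finset V} {v : V} (hv : v ∈ A) :
    ((margEdges G A Y).filter (fun e => v ∈ e)).card = degIn G v (A ∪ Y) := by
  rw [degIn]
  symm
  apply card_bij (fun u _ => s(v, u))
  · intro u hu
    rw [mem_filter] at hu
    rw [mem_filter, mem_margEdges]
    refine ⟨⟨?_, ?_, ⟨v, ?_, hv⟩⟩, ?_⟩
    · simpa using hu.2
    · intro w hw
      rw [Sym2.mem_iff] at hw
      rcases hw with rfl | rfl
      · exact mem_union_left _ hv
      · exact hu.1
    · simp
    · simp
  · intro a ha b hb hab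
    rw [Sym2.eq_iff] at hab
    rcases hab with ⟨-, rfl⟩ | ⟨rfl, rfl⟩
    · rfl
    · rfl
  · intro e he
    rw [mem_filter, mem_margEdges] at he
    obtain ⟨⟨he1, he2, -⟩, hve⟩ := he
    obtain ⟨u, rfl⟩ := (Sym2.mem_iff_exists).mp hve
    refine ⟨u, ?_, rfl⟩
    rw [mem_filter]
    have hadj : G.Adj v u := by simpa using he1
    exact ⟨he2 u (by simp), hadj⟩
end Lemmas

section Lemmas2
variable [Fintype V] [DecidableEq V] (G : SimpleGraph V) [DecidableRel G.Adj]

lemma margEdges_erase {A Y : Finset V} {v : V} (hv : v ∈ A) (hd : Disjoint A Y) :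
    margEdges G (A.erase v) Y = (margEdges G A Y).filter (fun e => v ∉ e) := by
  ext e
  rw [mem_filter, mem_margEdges, mem_margEdges]
  constructor
  · rintro ⟨h1, h2, u, hu, huA⟩
    have hvnot : v ∉ e := by
      intro hve
      have := h2 v hve
      rw [mem_union] at this
      rcases this with h | h
      · exact (mem_erase.mp h).1 rfl
      · exact (disjoint_left.mp hd hv) h
    exact ⟨⟨h1, fun w hw => by
      have := h2 w hw
      rw [mem_union] at this ⊢
      rcases this with h | h
      · exact Or.inl (mem_of_mem_erase h)
      · exact Or.inr h, ⟨u, hu, mem_of_mem_erase huA⟩⟩, hvnot⟩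
  · rintro ⟨⟨h1, h2, u, hu, huA⟩, hvnot⟩
    refine ⟨h1, fun w hw => ?_, ⟨u, hu, mem_erase.mpr ⟨fun h => hvnot (h ▸ hu), huA⟩⟩⟩
    have := h2 w hw
    rw [mem_union] at this ⊢
    rcases this with h | h
    · exact Or.inl (mem_erase.mpr ⟨fun hh => hvnot (hh ▸ hw), h⟩)
    · exact Or.inr h

lemma margEdges_erase_card {A Y : Finset V} {v : V} (hv : v ∈ A) (hd : Disjoint A Y) :
    (margEdges G (A.erase v) Y).card + degIn G v (A ∪ Y) = (margEdges G A Y).card := by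
  rw [margEdges_erase G hv hd, ← margEdges_filter_card G (Y := Y) hv]
  have := card_filter_add_card_filter_not (s := margEdges G A Y) (p := fun e => v ∈ e)
  omega

lemma innerEdges_mono {A B : Finset V} (h : A ⊆ B) : innerEdges G A ⊆ innerEdges G B := by
  intro e he
  rw [innerEdges, mem_filter] at he ⊢
  exact ⟨he.1, fun w hw => h (he.2 w hw)⟩

lemma margEdges_card_inner {Z P : Finset V} (hd : Disjoint Z P) :
    (margEdges G Z P).card + (innerEdges G P).card = (innerEdges G (Z ∪ P)).card := by
  have hset : margEdges G Z P = innerEdges G (Z ∪ P) \ innerEdges G P := by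
    ext e
    rw [mem_margEdges, mem_sdiff, innerEdges, innerEdges, mem_filter, mem_filter]
    constructor
    · rintro ⟨h1, h2, u, hu, huZ⟩
      exact ⟨⟨h1, h2⟩, fun hcon => disjoint_left.mp hd huZ (hcon.2 u hu)⟩
    · rintro ⟨⟨h1, h2⟩, h3⟩
      refine ⟨h1, h2, ?_⟩
      by_contra hcon
      push_neg at hcon
      exact h3 ⟨h1, fun w hw => by
        have := h2 w hw
        rw [mem_union] at this
        rcases this with h | h
        · exact absurd h (hcon w hw)
        · exact h⟩
  rw [hset, card_sdiff_of_subset (innerEdges_mono G subset_union_right)]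
  have := card_le_card (innerEdges_mono G (subset_union_right (s₁ := Z) (s₂ := P)))
  omega

lemma innerEdges_supermod (A B : Finset V) :
    (innerEdges G A).card + (innerEdges G B).card ≤
      (innerEdges G (A ∪ B)).card + (innerEdges G (A ∩ B)).card := by
  have hinter : innerEdges G A ∩ innerEdges G B = innerEdges G (A ∩ B) := by
    ext e
    simp only [innerEdges, mem_inter, mem_filter]
    constructor
    · rintro ⟨⟨h1, h2⟩, -, h3⟩
      exact ⟨h1, fun w hw => ⟨h2 w hw, h3 w hw⟩⟩
    · rintro ⟨h1, h2⟩
      exact ⟨⟨h1, fun w hw => (h2 w hw).1⟩, h1, fun w hw => (h2 w hw).2⟩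
  have hunion : innerEdges G A ∪ innerEdges G B ⊆ innerEdges G (A ∪ B) := by
    apply union_subset
    · exact innerEdges_mono G subset_union_left
    · exact innerEdges_mono G subset_union_right
  calc (innerEdges G A).card + (innerEdges G B).card
      = (innerEdges G A ∪ innerEdges G B).card + (innerEdges G A ∩ innerEdges G B).card :=
        (card_union_add_card_inter _ _).symm
    _ ≤ (innerEdges G (A ∪ B)).card + (innerEdges G (A ∩ B)).card := by
        rw [hinter]
        exact Nat.add_le_add_right (card_le_card hunion) _

lemma margEdges_split {Y1 Y2 U : Finset V} :
    margEdges G (Y1 ∪ Y2) U ⊆ margEdges G Y1 U ∪ margEdges G Y2 (Y1 ∪ U) := by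
  intro e he
  rw [mem_margEdges] at he
  obtain ⟨h1, h2, u, hu, huY⟩ := he
  rw [mem_union]
  by_cases hY2 : ∃ w ∈ e, w ∈ Y2
  · right
    rw [mem_margEdges]
    refine ⟨h1, fun w hw => ?_, hY2⟩
    have := h2 w hw
    rw [mem_union] at this ⊢
    rw [mem_union] at this ⊢
    tauto
  · left
    push_neg at hY2
    rw [mem_margEdges]
    refine ⟨h1, fun w hw => ?_, ?_⟩
    · have := h2 w hw
      rw [mem_union] at this ⊢
      rw [mem_union] at this
      rcases this with (h | h) | h
      · exact Or.inl h
      · exact absurd h (hY2 w hw)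
      · exact Or.inr h
    · rw [mem_union] at huY
      rcases huY with h | h
      · exact ⟨u, hu, h⟩
      · exact absurd h (hY2 u hu)

end Lemmas2

section Lemmas3
variable [Fintype V] [DecidableEq V] (G : SimpleGraph V) [DecidableRel G.Adj]

lemma sdiff_sdiff_self' (X U : Finset V) : X \ (U \ X) = X := by
  ext x; simp only [mem_sdiff]; tauto

lemma outDensity_subset (X U : Finset V) :
    outDensity G X (U \ X) = ((margEdges G X (U \ X)).card : ℚ) / (X.card : ℚ) := by
  rw [outDensity, sdiff_sdiff_self']

lemma outDensity_disjoint {Y U : Finset V} (h : Y ∩ U = ∅) :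
    outDensity G Y U = ((margEdges G Y U).card : ℚ) / (Y.card : ℚ) := by
  rw [outDensity, Finset.sdiff_eq_self_iff_disjoint.mpr (disjoint_iff_inter_eq_empty.mpr h)]

lemma margEdges_singleton_card {v : V} (Z : Finset V) :
    (margEdges G {v} Z).card = degIn G v ({v} ∪ Z) := by
  rw [← margEdges_filter_card G (Y := Z) (mem_singleton_self v)]
  congr 1
  symm
  apply (filter_eq_self).mpr
  intro e he
  rw [mem_margEdges] at he
  obtain ⟨-, -, u, hu, huv⟩ := he
  rw [mem_singleton] at huv
  exact huv ▸ hu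

lemma degIn_union_self {v : V} (Z : Finset V) : degIn G v ({v} ∪ Z) = degIn G v Z := by
  rw [degIn, degIn]
  congr 1
  ext u
  simp only [mem_filter, mem_union, mem_singleton]
  constructor
  · rintro ⟨rfl | h, hadj⟩
    · exact absurd hadj (G.irrefl)
    · exact ⟨h, hadj⟩
  · rintro ⟨h, hadj⟩
    exact ⟨Or.inr h, hadj⟩

lemma peel (Y : Finset V) (t : ℚ) :
    ∀ A : Finset V, Disjoint A Y → A.Nonempty → t * A.card ≤ ((margEdges G A Y).card : ℚ) →
    ∃ T, T ⊆ A ∧ T.Nonempty ∧ ∀ v ∈ T, t ≤ (degIn G v (T ∪ Y) : ℚ) := by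
  intro A
  induction A using Finset.strongInduction with
  | _ A ih =>
    intro hd hne hcard
    by_cases hall : ∀ v ∈ A, t ≤ (degIn G v (A ∪ Y) : ℚ)
    · exact ⟨A, Subset.rfl, hne, hall⟩
    · push_neg at hall
      obtain ⟨v, hv, hlt⟩ := hall
      have hA' : A.erase v ⊂ A := erase_ssubset hv
      have hcd := margEdges_erase_card G hv hd
      have hstrict : t * (A.erase v).card < ((margEdges G (A.erase v) Y).card : ℚ) := by
        have h1 : ((margEdges G (A.erase v) Y).card : ℚ)
            = ((margEdges G A Y).card : ℚ) - (degIn G v (A ∪ Y) : ℚ) := by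
          push_cast [← hcd]; ring
        have h2 : ((A.erase v).card : ℚ) = (A.card : ℚ) - 1 := by
          rw [card_erase_of_mem hv]
          have : 1 ≤ A.card := card_pos.mpr hne
          push_cast [Nat.cast_sub this]; ring
        rw [h1, h2]
        nlinarith
      have hne' : (A.erase v).Nonempty := by
        rw [nonempty_iff_ne_empty]
        intro hcon
        rw [hcon] at hstrict
        simp [margEdges_empty_left] at hstrict
      obtain ⟨T, hT1, hT2, hT3⟩ := ih _ hA' (hd.mono_left (erase_subset _ _)) hne' (le_of_lt hstrict)
      exact ⟨T, hT1.trans (erase_subset _ _), hT2, hT3⟩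

lemma handshake {X Y : Finset V} (hd : Disjoint X Y) :
    ∑ v ∈ X, degIn G v (X ∪ Y) ≤ 2 * (margEdges G X Y).card := by
  classical
  set U := X ∪ Y with hU
  set PP := (X ×ˢ U).filter (fun p => G.Adj p.1 p.2) with hPP
  have hsum : ∑ v ∈ X, degIn G v U = PP.card := by
    rw [card_eq_sum_card_fiberwise (f := Prod.fst) (t := X)
      (fun p hp => (mem_product.mp (mem_filter.mp hp).1).1)]
    apply sum_congr rfl
    intro v hv
    rw [degIn]
    apply card_bij (fun u _ => (v, u))
    · intro u hu
      rw [mem_filter] at hu ⊢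
      exact ⟨mem_filter.mpr ⟨mem_product.mpr ⟨hv, hu.1⟩, hu.2⟩, rfl⟩
    · intro a _ b _ hab
      exact (Prod.mk.injEq _ _ _ _).mp hab |>.2
    · intro p hp
      rw [mem_filter, mem_filter, mem_product] at hp
      exact ⟨p.2, mem_filter.mpr ⟨hp.1.1.2, hp.2 ▸ hp.1.2⟩, by rw [← hp.2]⟩
  rw [hsum]
  apply card_le_mul_card_image_of_maps_to (f := fun p => s(p.1, p.2))
  · intro p hp
    rw [mem_filter, mem_product] at hp
    rw [mem_margEdges]
    refine ⟨(SimpleGraph.mem_edgeFinset).mpr hp.2, fun w hw => ?_, ⟨p.1, Sym2.mem_mk_left _ _, hp.1.1⟩⟩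
    rw [Sym2.mem_iff] at hw
    rcases hw with rfl | rfl
    · exact mem_union_left _ hp.1.1
    · exact hp.1.2
  · intro b hb
    induction b using Sym2.ind with
    | _ a c =>
      have hsub : PP.filter (fun p => s(p.1, p.2) = s(a, c)) ⊆ {(a, c), (c, a)} := by
        intro p hp
        rw [mem_filter] at hp
        rw [Sym2.eq_iff] at hp
        rcases hp.2 with ⟨h1, h2⟩ | ⟨h1, h2⟩
        · simp [← h1, ← h2, Prod.ext_iff]
        · simp [← h1, ← h2, Prod.ext_iff]
      calc (PP.filter (fun p => s(p.1, p.2) = s(a, c))).card ≤ ({(a, c), (c, a)} : Finset (V × V)).card :=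
            card_le_card hsub
        _ ≤ 2 := card_insert_le _ _ |>.trans (by simp)

end Lemmas3

section MainB
variable [Fintype V] [DecidableEq V] (G : SimpleGraph V) [DecidableRel G.Adj]

lemma marg_card_eq_inner {Z P : Finset V} (hd : Disjoint Z P) :
    ((margEdges G Z P).card : ℚ) = ((innerEdges G (Z ∪ P)).card : ℚ) - ((innerEdges G P).card : ℚ) := by
  have := margEdges_card_inner G hd
  push_cast [← this]
  ring

lemma f_supermod {P Z1 Z2 : Finset V} (h1 : Disjoint Z1 P) (h2 : Disjoint Z2 P) :
    ((margEdges G Z1 P).card : ℚ) + ((margEdges G Z2 P).card : ℚ) ≤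
      ((margEdges G (Z1 ∪ Z2) P).card : ℚ) + ((margEdges G (Z1 ∩ Z2) P).card : ℚ) := by
  rw [marg_card_eq_inner G h1, marg_card_eq_inner G h2,
    marg_card_eq_inner G (disjoint_union_left.mpr ⟨h1, h2⟩),
    marg_card_eq_inner G (h1.mono_left inter_subset_left)]
  have key := innerEdges_supermod G (Z1 ∪ P) (Z2 ∪ P)
  have e1 : (Z1 ∪ P) ∪ (Z2 ∪ P) = (Z1 ∪ Z2) ∪ P := by
    ext x; simp only [mem_union]; tauto
  have e2 : (Z1 ∪ P) ∩ (Z2 ∪ P) = (Z1 ∩ Z2) ∪ P := by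
    ext x
    simp only [mem_union, mem_inter]
    constructor
    · rintro ⟨h | h, h' | h'⟩
      · exact Or.inl ⟨h, h'⟩
      · exact Or.inr h'
      · exact Or.inr h
      · exact Or.inr h
    · rintro (⟨h, h'⟩ | h)
      · exact ⟨Or.inl h, Or.inl h'⟩
      · exact ⟨Or.inr h, Or.inr h⟩
  rw [e1, e2] at key
  have : ((innerEdges G (Z1 ∪ P)).card : ℚ) + ((innerEdges G (Z2 ∪ P)).card : ℚ) ≤
      ((innerEdges G ((Z1 ∪ Z2) ∪ P)).card : ℚ) + ((innerEdges G ((Z1 ∩ Z2) ∪ P)).card : ℚ) := by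
    exact_mod_cast key
  linarith

set_option maxHeartbeats 1000000 in
lemma B_min_degree (k : ℕ) (B : ℕ → Finset V)
    (hBchain : ∀ i j, i < j → j ≤ k → B i ⊂ B j)
    (hBall : ∀ W : Finset V, LocallyDense G W ↔ ∃ i ≤ k, W = B i)
    (jB : ℕ) (hjB1 : 1 ≤ jB) (hjBk : jB ≤ k) :
    ∀ v ∈ B jB, outDensity G (B jB) (B (jB - 1)) ≤ (degIn G v (B jB) : ℚ) := by
  set P := B (jB - 1) with hP
  set W := B jB with hW
  have hPWs : P ⊂ W := hBchain _ _ (by omega) hjBk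
  have hPW : P ⊆ W := hPWs.subset
  set S := W \ P with hSdef
  have hSne : S.Nonempty := by
    obtain ⟨x, hxW, hxP⟩ := exists_of_ssubset hPWs
    exact ⟨x, mem_sdiff.mpr ⟨hxW, hxP⟩⟩
  have hSP : Disjoint S P := sdiff_disjoint
  have hSPW : S ∪ P = W := by
    rw [hSdef, union_comm]
    exact union_sdiff_of_subset hPW
  -- candidates and the maximum ratio
  set Cand := S.powerset.filter (fun Z => Z.Nonempty) with hCand
  have hmemCand : ∀ Z, Z ∈ Cand ↔ Z ⊆ S ∧ Z.Nonempty := by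
    intro Z; rw [hCand, mem_filter, mem_powerset]
  obtain ⟨Z₀, hZ₀mem, hZ₀max⟩ := exists_max_image Cand
    (fun Z => ((margEdges G Z P).card : ℚ) / (Z.card : ℚ)) ⟨S, (hmemCand S).mpr ⟨Subset.rfl, hSne⟩⟩
  set D := ((margEdges G Z₀ P).card : ℚ) / (Z₀.card : ℚ) with hD
  have hZ₀S : Z₀ ⊆ S := ((hmemCand _).mp hZ₀mem).1
  have hZ₀ne : Z₀.Nonempty := ((hmemCand _).mp hZ₀mem).2
  have hZ₀pos : (0 : ℚ) < Z₀.card := by exact_mod_cast card_pos.mpr hZ₀ne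
  have hmax : ∀ Z, Z ⊆ S → Z.Nonempty → ((margEdges G Z P).card : ℚ) ≤ D * Z.card := by
    intro Z hZS hZne
    have hpos : (0 : ℚ) < Z.card := by exact_mod_cast card_pos.mpr hZne
    have := hZ₀max Z ((hmemCand Z).mpr ⟨hZS, hZne⟩)
    rw [div_le_iff₀ hpos] at this
    linarith [this]
  have hmax' : ∀ Z, Z ⊆ S → ((margEdges G Z P).card : ℚ) ≤ D * Z.card := by
    intro Z hZS
    rcases Z.eq_empty_or_nonempty with rfl | hne
    · simp [margEdges_empty_left]
    · exact hmax Z hZS hne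
  have hfZ₀ : ((margEdges G Z₀ P).card : ℚ) = D * Z₀.card := by
    rw [hD]; field_simp
  -- the maximal maximizer
  set Zs := (Cand.filter (fun Z => D * Z.card ≤ ((margEdges G Z P).card : ℚ))).sup id with hZs
  have hsub_Zs : ∀ Z, Z ⊆ S → Z.Nonempty → D * Z.card ≤ ((margEdges G Z P).card : ℚ) → Z ⊆ Zs := by
    intro Z h1 h2 h3
    apply le_sup (f := id) (b := Z)
    rw [mem_filter]
    exact ⟨(hmemCand Z).mpr ⟨h1, h2⟩, h3⟩
  have hZs_prop : Zs ⊆ S ∧ D * Zs.card ≤ ((margEdges G Zs P).card : ℚ) := by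
    rw [hZs]
    apply sup_induction (p := fun T => T ⊆ S ∧ D * T.card ≤ ((margEdges G T P).card : ℚ))
    · constructor
      · exact empty_subset S
      · simp [margEdges_empty_left]
    · rintro a ⟨ha1, ha2⟩ b ⟨hb1, hb2⟩
      simp only [sup_eq_union]
      constructor
      · exact union_subset ha1 hb1
      · have hsup := f_supermod G (P := P) (Z1 := a) (Z2 := b)
          (hSP.mono_left ha1) (hSP.mono_left hb1)
        have hint : ((margEdges G (a ∩ b) P).card : ℚ) ≤ D * (a ∩ b).card :=
          hmax' _ (inter_subset_left.trans ha1)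
        have hcards : ((a ∪ b).card : ℚ) + ((a ∩ b).card : ℚ) = (a.card : ℚ) + (b.card : ℚ) := by
          exact_mod_cast card_union_add_card_inter a b
        nlinarith [hsup, hint, hcards]
    · intro Z hZ
      rw [mem_filter] at hZ
      simp only [id_eq]
      exact ⟨((hmemCand Z).mp hZ.1).1, hZ.2⟩
  have hZsS : Zs ⊆ S := hZs_prop.1
  have hsubZ₀ : Z₀ ⊆ Zs := hsub_Zs Z₀ hZ₀S hZ₀ne (le_of_eq hfZ₀.symm)
  have hZsne : Zs.Nonempty := ⟨hZ₀ne.choose, hsubZ₀ hZ₀ne.choose_spec⟩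
  have hfZs : ((margEdges G Zs P).card : ℚ) = D * Zs.card :=
    le_antisymm (hmax' Zs hZsS) hZs_prop.2
  have hZsP : Disjoint Zs P := hSP.mono_left hZsS
  have hZsposQ : (0 : ℚ) < Zs.card := by exact_mod_cast card_pos.mpr hZsne
  have hDnn : (0 : ℚ) ≤ D := by
    rw [hD]; exact div_nonneg (Nat.cast_nonneg _) (Nat.cast_nonneg _)
  clear hZ₀max hZ₀mem hmemCand hCand hZs hZs_prop hfZ₀ hZ₀pos hsubZ₀ hZ₀S hZ₀ne hD
  clear_value Zs D Cand
  clear Cand Z₀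
  -- degrees inside Zs
  have hdegZ : ∀ v ∈ Zs, D ≤ (degIn G v (Zs ∪ P) : ℚ) := by
    intro v hv
    by_contra hlt
    push_neg at hlt
    have hcd := margEdges_erase_card G hv hZsP
    have herase : ((margEdges G (Zs.erase v) P).card : ℚ)
        = ((margEdges G Zs P).card : ℚ) - (degIn G v (Zs ∪ P) : ℚ) := by
      push_cast [← hcd]; ring
    have hcarderase : ((Zs.erase v).card : ℚ) = (Zs.card : ℚ) - 1 := by
      rw [card_erase_of_mem hv]
      have : 1 ≤ Zs.card := card_pos.mpr hZsne
      push_cast [Nat.cast_sub this]; ring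
    have hgt : D * (Zs.erase v).card < ((margEdges G (Zs.erase v) P).card : ℚ) := by
      rw [herase, hcarderase, hfZs]
      have hexp : D * ((Zs.card : ℚ) - 1) = D * (Zs.card : ℚ) - D := by ring
      rw [hexp]
      linarith
    have := hmax' (Zs.erase v) ((erase_subset _ _).trans hZsS)
    linarith
  -- degrees inside P
  have hLDP : LocallyDense G P := (hBall P).mpr ⟨jB - 1, by omega, rfl⟩
  have hdensP : ∀ X, X ⊆ P → X.Nonempty → D * X.card < ((margEdges G X (P \ X)).card : ℚ) := by
    intro X hXP hXne
    have hXpos : (0 : ℚ) < X.card := by exact_mod_cast card_pos.mpr hXne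
    have hno := hLDP
    rw [LocallyDense] at hno
    push_neg at hno
    have := hno X Zs hXne hZsne hXP (disjoint_iff_inter_eq_empty.mp hZsP)
    have hZsP' : outDensity G Zs P = D := by
      rw [outDensity_disjoint G (disjoint_iff_inter_eq_empty.mp hZsP), hfZs]
      field_simp
    rw [hZsP', outDensity_subset] at this
    rw [lt_div_iff₀ hXpos] at this
    linarith
  -- Zs must be all of S
  have hZsEqS : Zs = S := by
    by_contra hneq
    set U := P ∪ Zs with hUdef
    have hSsubW : S ⊆ W := by
      intro x hx
      exact (mem_sdiff.mp hx).1
    have hUW : U ⊆ W := union_subset hPW (hZsS.trans hSsubW)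
    have hPU : P ⊆ U := subset_union_left
    have hcardU : U.card = P.card + Zs.card := card_union_of_disjoint hZsP.symm
    have hPcardlt : P.card < U.card := by
      have := card_pos.mpr hZsne; omega
    have hUcardlt : U.card < W.card := by
      have h1 : Zs ⊂ S := Finset.ssubset_iff_subset_ne.mpr ⟨hZsS, hneq⟩
      have h2 : Zs.card < S.card := card_lt_card h1
      have h3 : W.card = S.card + P.card := by
        rw [← hSPW, card_union_of_disjoint hSP]
      omega
    have hULD : ¬ LocallyDense G U := by
      intro hLD
      obtain ⟨y, hyk, hyU⟩ := (hBall U).mp hLD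
      rcases le_or_gt y (jB - 1) with hy | hy
      · have hBy : B y ⊆ P := by
          rcases eq_or_lt_of_le hy with h | h
          · rw [hP, ← h]
          · exact (hBchain y (jB - 1) h (by omega)).subset
        have : U.card ≤ P.card := card_le_card (by rw [hyU]; exact hBy)
        omega
      · have hWBy : W ⊆ B y := by
          rcases eq_or_lt_of_le (show jB ≤ y by omega) with h | h
          · rw [hW, h]
          · exact (hBchain jB y h hyk).subset
        have : W.card ≤ U.card := card_le_card (by rw [hyU]; exact hWBy)
        omega
    rw [LocallyDense, not_not] at hULD
    obtain ⟨X, Y, hXne, hYne, hXU, hYU, hdens⟩ := hULD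
    have hXpos : (0 : ℚ) < X.card := by exact_mod_cast card_pos.mpr hXne
    have hYpos : (0 : ℚ) < Y.card := by exact_mod_cast card_pos.mpr hYne
    have hYdisjU : Disjoint Y U := disjoint_iff_inter_eq_empty.mpr hYU
    -- Upper bound : outDensity G Y U < D
    have hupper : outDensity G Y U < D := by
      set Y1 := Y ∩ W with hY1def
      set Y2 := Y \ W with hY2def
      have hYsplit : Y1 ∪ Y2 = Y := by
        ext x; simp only [hY1def, hY2def, mem_union, mem_inter, mem_sdiff]; tauto
      have hY12disj : Disjoint Y1 Y2 := by
        rw [hY1def, hY2def]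
        exact (disjoint_sdiff).mono_left inter_subset_right
      have hYcards : (Y.card : ℚ) = (Y1.card : ℚ) + (Y2.card : ℚ) := by
        rw [← hYsplit, card_union_of_disjoint hY12disj]; push_cast; ring
      have hY1U : Disjoint Y1 U := hYdisjU.mono_left inter_subset_left
      have hY1S : Y1 ⊆ S := by
        intro x hx
        rw [hY1def, mem_inter] at hx
        rw [hSdef, mem_sdiff]
        exact ⟨hx.2, fun hxP => disjoint_left.mp hYdisjU hx.1 (hPU hxP)⟩
      have hY1Zs : Disjoint Y1 Zs := hY1U.mono_right subset_union_right
      have hμ1 : ((margEdges G Y1 U).card : ℚ) ≤ D * Y1.card ∧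
          (Y1.Nonempty → ((margEdges G Y1 U).card : ℚ) < D * Y1.card) := by
        rcases Y1.eq_empty_or_nonempty with h | hne1
        · constructor
          · rw [h]; simp [margEdges_empty_left]
          · intro hcon; rw [h] at hcon; exact absurd hcon (not_nonempty_empty)
        · have e1 := margEdges_card_inner G hY1U
          have e2 := margEdges_card_inner G
            ((hSP.mono_left (union_subset hY1S hZsS)) : Disjoint (Y1 ∪ Zs) P)
          have e3 := margEdges_card_inner G hZsP
          have eq1 : Y1 ∪ U = (Y1 ∪ Zs) ∪ P := by
            ext x; simp only [hUdef, mem_union]; tauto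
          have eq2 : Zs ∪ P = U := by rw [hUdef, union_comm]
          rw [eq1] at e1
          rw [eq2] at e3
          have hval : ((margEdges G Y1 U).card : ℚ)
              = ((margEdges G (Y1 ∪ Zs) P).card : ℚ) - ((margEdges G Zs P).card : ℚ) := by
            have c1 : ((margEdges G Y1 U).card : ℚ) + ((innerEdges G U).card : ℚ)
                = ((innerEdges G ((Y1 ∪ Zs) ∪ P)).card : ℚ) := by exact_mod_cast e1
            have c2 : ((margEdges G (Y1 ∪ Zs) P).card : ℚ) + ((innerEdges G P).card : ℚ)
                = ((innerEdges G ((Y1 ∪ Zs) ∪ P)).card : ℚ) := by exact_mod_cast e2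
            have c3 : ((margEdges G Zs P).card : ℚ) + ((innerEdges G P).card : ℚ)
                = ((innerEdges G U).card : ℚ) := by exact_mod_cast e3
            linarith
          have hcardY1Zs : ((Y1 ∪ Zs).card : ℚ) = (Y1.card : ℚ) + (Zs.card : ℚ) := by
            rw [card_union_of_disjoint hY1Zs]; push_cast; ring
          have hstrict : ((margEdges G (Y1 ∪ Zs) P).card : ℚ) < D * ((Y1 ∪ Zs).card : ℚ) := by
            rcases lt_or_eq_of_le (hmax (Y1 ∪ Zs) (union_subset hY1S hZsS)
              ⟨hne1.choose, mem_union_left _ hne1.choose_spec⟩) with h | h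
            · exact h
            · exfalso
              have hsub := hsub_Zs (Y1 ∪ Zs) (union_subset hY1S hZsS)
                ⟨hne1.choose, mem_union_left _ hne1.choose_spec⟩ (le_of_eq h.symm)
              exact disjoint_left.mp hY1Zs hne1.choose_spec
                (hsub (mem_union_left _ hne1.choose_spec))
          have : ((margEdges G Y1 U).card : ℚ) < D * Y1.card := by
            rw [hval, hfZs]
            rw [hcardY1Zs] at hstrict
            linarith
          exact ⟨le_of_lt this, fun _ => this⟩
      have hμ2 : ((margEdges G Y2 (Y1 ∪ U)).card : ℚ) ≤ D * Y2.card ∧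
          (Y2.Nonempty → ((margEdges G Y2 (Y1 ∪ U)).card : ℚ) < D * Y2.card) := by
        rcases Y2.eq_empty_or_nonempty with h | hne2
        · constructor
          · rw [h]; simp [margEdges_empty_left]
          · intro hcon; rw [h] at hcon; exact absurd hcon (not_nonempty_empty)
        · have hY2pos : (0 : ℚ) < Y2.card := by exact_mod_cast card_pos.mpr hne2
          have hsubW : Y1 ∪ U ⊆ W := union_subset (inter_subset_right) hUW
          have hmono := card_le_card (margEdges_mono_right G (A := Y2) hsubW)
          have hLDW : LocallyDense G W := (hBall W).mpr ⟨jB, hjBk, rfl⟩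
          rw [LocallyDense] at hLDW
          push_neg at hLDW
          have hY2W : Y2 ∩ W = ∅ := by
            rw [hY2def]; ext x; simp only [mem_inter, mem_sdiff, notMem_empty]; tauto
          have hkey := hLDW S Y2 hSne hne2 sdiff_subset hY2W
          have hWS : W \ S = P := by
            rw [hSdef, sdiff_sdiff_self_left, inter_eq_right.mpr hPW]
          rw [hWS] at hkey
          have hSPd : S \ P = S := sdiff_eq_self_iff_disjoint.mpr hSP
          have hod1 : outDensity G S P = ((margEdges G S P).card : ℚ) / (S.card : ℚ) := by
            rw [outDensity, hSPd]
          have hod2 : outDensity G Y2 W = ((margEdges G Y2 W).card : ℚ) / (Y2.card : ℚ) :=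
            outDensity_disjoint G hY2W
          rw [hod1, hod2] at hkey
          have hSpos : (0 : ℚ) < S.card := by exact_mod_cast card_pos.mpr hSne
          have hfS : ((margEdges G S P).card : ℚ) ≤ D * S.card := hmax' S Subset.rfl
          have hkey2 : ((margEdges G Y2 W).card : ℚ) < D * Y2.card := by
            rw [div_lt_div_iff₀ hY2pos hSpos] at hkey
            have : ((margEdges G S P).card : ℚ) / (S.card : ℚ) ≤ D := by
              rw [div_le_iff₀ hSpos]; linarith
            nlinarith [hkey, this, hY2pos, hSpos]
          have : ((margEdges G Y2 (Y1 ∪ U)).card : ℚ) ≤ ((margEdges G Y2 W).card : ℚ) := by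
            exact_mod_cast hmono
          exact ⟨by linarith, fun _ => by linarith⟩
      have hsplitcard : ((margEdges G Y U).card : ℚ)
          ≤ ((margEdges G Y1 U).card : ℚ) + ((margEdges G Y2 (Y1 ∪ U)).card : ℚ) := by
        have h1 : margEdges G Y U ⊆ margEdges G Y1 U ∪ margEdges G Y2 (Y1 ∪ U) := by
          rw [← hYsplit]
          exact margEdges_split G
        have := (card_le_card h1).trans (card_union_le _ _)
        exact_mod_cast this
      have htot : ((margEdges G Y U).card : ℚ) < D * Y.card := by
        rcases Y1.eq_empty_or_nonempty with h1 | h1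
        · have hYeq : Y2 = Y := by rw [← hYsplit, h1, empty_union]
          have := hμ2.2 (hYeq ▸ hYne)
          have hz : ((margEdges G Y1 U).card : ℚ) = 0 := by
            rw [h1, margEdges_empty_left]; simp
          rw [hYcards]
          have h1c : (Y1.card : ℚ) = 0 := by rw [h1]; simp
          linarith
        · have := hμ1.2 h1
          rw [hYcards]
          linarith [hμ2.1]
      rw [outDensity_disjoint G hYU]
      rw [div_lt_iff₀ hYpos]
      linarith
    -- Lower bound : D ≤ outDensity G X (U \ X)
    have hlower : D ≤ outDensity G X (U \ X) := by
      set X1 := X ∩ P with hX1def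
      set X2 := X ∩ Zs with hX2def
      have hX12 : X1 ∪ X2 = X := by
        ext x
        simp only [hX1def, hX2def, mem_union, mem_inter]
        constructor
        · tauto
        · intro hx
          have := hXU hx
          rw [hUdef, mem_union] at this
          tauto
      have hX12disj : Disjoint X1 X2 :=
        (hZsP.symm).mono inter_subset_right inter_subset_right
      have hXcards : (X.card : ℚ) = (X1.card : ℚ) + (X2.card : ℚ) := by
        rw [← hX12, card_union_of_disjoint hX12disj]; push_cast; ring
      set Ea := margEdges G X1 (P \ X1) with hEadef
      set Eb := margEdges G Zs P \ margEdges G (Zs \ X2) P with hEbdef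
      have hEa : D * X1.card ≤ (Ea.card : ℚ) := by
        rcases X1.eq_empty_or_nonempty with h | hne1
        · rw [h, hEadef]
          simp [margEdges_empty_left, h]
        · exact le_of_lt (hdensP X1 inter_subset_right hne1)
      have hX2Zs : X2 ⊆ Zs := inter_subset_right
      have hEb : D * X2.card ≤ (Eb.card : ℚ) := by
        have hsub : margEdges G (Zs \ X2) P ⊆ margEdges G Zs P :=
          margEdges_mono_left G sdiff_subset
        have hcard : (Eb.card : ℚ)
            = ((margEdges G Zs P).card : ℚ) - ((margEdges G (Zs \ X2) P).card : ℚ) := by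
          rw [hEbdef, card_sdiff_of_subset hsub]
          have := card_le_card hsub
          push_cast [Nat.cast_sub this]; ring
        have hZsX2 : ((Zs \ X2).card : ℚ) = (Zs.card : ℚ) - (X2.card : ℚ) := by
          rw [card_sdiff_of_subset hX2Zs]
          have := card_le_card hX2Zs
          push_cast [Nat.cast_sub this]; ring
        have hfsub : ((margEdges G (Zs \ X2) P).card : ℚ) ≤ D * ((Zs \ X2).card : ℚ) :=
          hmax' _ (sdiff_subset.trans hZsS)
        rw [hZsX2] at hfsub
        rw [hcard, hfZs]
        linarith
      have hEaEbdisj : Disjoint Ea Eb := by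
        rw [disjoint_left]
        intro e hea heb
        rw [hEadef, mem_margEdges] at hea
        rw [hEbdef, mem_sdiff, mem_margEdges] at heb
        obtain ⟨-, -, u, hu, huZs⟩ := heb.1
        have := hea.2.1 u hu
        rw [mem_union] at this
        have huP : u ∈ P := by
          rcases this with h | h
          · exact inter_subset_right (hX1def ▸ h)
          · exact (mem_sdiff.mp h).1
        exact disjoint_left.mp hZsP huZs huP
      have hEaEbsub : Ea ∪ Eb ⊆ margEdges G X (U \ X) := by
        intro e he
        rw [mem_union] at he
        have hinU : ∀ w, w ∈ U → w ∈ X ∪ (U \ X) := by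
          intro w hw
          rw [mem_union, mem_sdiff]
          by_cases hwX : w ∈ X
          · exact Or.inl hwX
          · exact Or.inr ⟨hw, hwX⟩
        rcases he with he | he
        · rw [hEadef, mem_margEdges] at he
          obtain ⟨h1, h2, u, hu, huX1⟩ := he
          rw [mem_margEdges]
          refine ⟨h1, fun w hw => ?_, u, hu, hX12 ▸ mem_union_left _ huX1⟩
          have := h2 w hw
          rw [mem_union] at this
          have hwP : w ∈ P := by
            rcases this with h | h
            · exact inter_subset_right (hX1def ▸ h)
            · exact (mem_sdiff.mp h).1
          exact hinU w (hPU hwP)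
        · rw [hEbdef, mem_sdiff, mem_margEdges] at he
          obtain ⟨⟨h1, h2, u, hu, huZs⟩, hnot⟩ := he
          have hallU : ∀ w ∈ e, w ∈ U := by
            intro w hw
            have := h2 w hw
            rw [mem_union] at this
            rcases this with h | h
            · exact subset_union_right h
            · exact hPU h
          rw [mem_margEdges]
          refine ⟨h1, fun w hw => hinU w (hallU w hw), ?_⟩
          by_contra hcon
          push_neg at hcon
          apply hnot
          rw [mem_margEdges]
          refine ⟨h1, fun w hw => ?_, u, hu, ?_⟩
          · have := h2 w hw
            rw [mem_union] at this ⊢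
            rcases this with h | h
            · left
              rw [mem_sdiff]
              exact ⟨h, fun hx2 => hcon w hw (inter_subset_left (hX2def ▸ hx2))⟩
            · exact Or.inr h
          · rw [mem_sdiff]
            exact ⟨huZs, fun hx2 => hcon u hu (inter_subset_left (hX2def ▸ hx2))⟩
      have htot : D * X.card ≤ ((margEdges G X (U \ X)).card : ℚ) := by
        have h1 : Ea.card + Eb.card ≤ (margEdges G X (U \ X)).card := by
          rw [← card_union_of_disjoint hEaEbdisj]
          exact card_le_card hEaEbsub
        have h1q : (Ea.card : ℚ) + (Eb.card : ℚ) ≤ ((margEdges G X (U \ X)).card : ℚ) := by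
          exact_mod_cast h1
        rw [hXcards]
        linarith
      rw [outDensity_subset]
      rw [le_div_iff₀ hXpos]
      linarith
    linarith [hlower.trans hdens, hupper,
      (show outDensity G Y U < D from hupper)]
  -- conclude the minimum-degree bound
  have hodWP : outDensity G W P = ((margEdges G S P).card : ℚ) / (S.card : ℚ) := by
    rw [outDensity]
  have hSpos : (0 : ℚ) < S.card := by exact_mod_cast card_pos.mpr hSne
  have hDd : outDensity G W P = D := by
    rw [hodWP, ← hZsEqS, hfZs, hZsEqS]
    field_simp
  intro v hv
  rw [hDd]
  by_cases hvP : v ∈ P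
  · have hd1 := hdensP {v} (singleton_subset_iff.mpr hvP) (singleton_nonempty v)
    rw [margEdges_singleton_card] at hd1
    have heq : {v} ∪ (P \ {v}) = P := by
      ext x
      simp only [mem_union, mem_singleton, mem_sdiff]
      constructor
      · rintro (rfl | h)
        · exact hvP
        · exact h.1
      · intro hx
        by_cases hxv : x = v
        · exact Or.inl hxv
        · exact Or.inr ⟨hx, hxv⟩
    rw [heq] at hd1
    simp only [card_singleton, Nat.cast_one, mul_one] at hd1
    have hmono : (degIn G v P : ℚ) ≤ (degIn G v W : ℚ) := by
      exact_mod_cast degIn_mono G hPW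
    linarith
  · have hvS : v ∈ Zs := by
      rw [hZsEqS, hSdef, mem_sdiff]
      exact ⟨hv, hvP⟩
    have := hdegZ v hvS
    have heq : Zs ∪ P = W := by rw [hZsEqS]; exact hSPW
    rw [heq] at this
    exact this

end MainB


set_option maxHeartbeats 1000000 in
theorem core_profile_two_approx [Fintype V] [DecidableEq V] (G : SimpleGraph V) [DecidableRel G.Adj]
    (n : ℕ) (hn : n = Fintype.card V)
    (k : ℕ) (B : ℕ → Finset V) (hB0 : B 0 = ∅) (hBk : B k = Finset.univ)
    (hBchain : ∀ i j, i < j → j ≤ k → B i ⊂ B j)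
    (hBall : ∀ W : Finset V, LocallyDense G W ↔ ∃ i ≤ k, W = B i)
    (l : ℕ) (C : ℕ → Finset V) (hC0 : C 0 = ∅) (hCl : C l = Finset.univ)
    (hCchain : ∀ s t, s < t → t ≤ l → C s ⊂ C t)
    (hcore : ∀ t, 1 ≤ t → t ≤ l → ∃ κ : ℕ, IsKCore G κ (C t))
    (hallcores : ∀ (X : Finset V) (κ : ℕ), IsKCore G κ X → ∃ t ≤ l, X = C t)
    (i : ℕ) (hi1 : 1 ≤ i) (hin : i ≤ n)
    (jB : ℕ) (hjB1 : i ≤ (B jB).card) (hjB2 : ∀ x < jB, (B x).card < i)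
    (jC : ℕ) (hjC1 : i ≤ (C jC).card) (hjC2 : ∀ x < jC, (C x).card < i) :
    outDensity G (B jB) (B (jB - 1)) / 2 ≤ outDensity G (C jC) (C (jC - 1)) := by
  have hjBpos : 1 ≤ jB := by
    by_contra h
    push_neg at h
    interval_cases jB
    rw [hB0] at hjB1
    simp at hjB1
    omega
  have hjBk : jB ≤ k := by
    by_contra h
    push_neg at h
    have := hjB2 k h
    rw [hBk, card_univ] at this
    omega
  have hjCpos : 1 ≤ jC := by
    by_contra h
    push_neg at h
    interval_cases jC
    rw [hC0] at hjC1
    simp at hjC1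
    omega
  have hjCl : jC ≤ l := by
    by_contra h
    push_neg at h
    have := hjC2 l h
    rw [hCl, card_univ] at this
    omega
  set d := outDensity G (B jB) (B (jB - 1)) with hd
  have hmindeg := B_min_degree G k B hBchain hBall jB hjBpos hjBk
  set m := ⌈d⌉₊ with hm
  have hdegm : ∀ v ∈ B jB, m ≤ degIn G v (B jB) := fun v hv =>
    Nat.ceil_le.mpr (hmindeg v hv)
  -- the m-core closure
  set M := ((univ : Finset V).powerset.filter
    (fun D => ∀ v ∈ D, m ≤ degIn G v D)).sup id with hM
  have hsubM : ∀ T : Finset V, (∀ v ∈ T, m ≤ degIn G v T) → T ⊆ M := by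
    intro T hT
    apply le_sup (f := id) (b := T)
    rw [mem_filter]
    exact ⟨mem_powerset.mpr (subset_univ T), hT⟩
  have hMdeg : ∀ v ∈ M, m ≤ degIn G v M := by
    rw [hM]
    apply sup_induction (p := fun T => ∀ v ∈ T, m ≤ degIn G v T)
    · intro v hv
      exact absurd hv (notMem_empty v)
    · intro a ha b hb v hv
      rw [sup_eq_union] at hv ⊢
      rw [mem_union] at hv
      rcases hv with h | h
      · exact le_trans (ha v h) (degIn_mono G subset_union_left)
      · exact le_trans (hb v h) (degIn_mono G subset_union_right)
    · intro T hT
      simp only [id_eq]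
      exact (mem_filter.mp hT).2
  have hMcore : IsKCore G m M := ⟨hMdeg, hsubM⟩
  obtain ⟨t, htl, htM⟩ := hallcores M m hMcore
  have hBM : B jB ⊆ M := hsubM _ hdegm
  have hiM : i ≤ M.card := le_trans hjB1 (card_le_card hBM)
  have htjC : jC ≤ t := by
    by_contra h
    push_neg at h
    have := hjC2 t h
    rw [← htM] at this
    omega
  have hCM : C jC ⊆ M := by
    rcases eq_or_lt_of_le htjC with h | h
    · rw [htM, ← h]
    · rw [htM]
      exact (hCchain jC t h htl).subset
  obtain ⟨κ, hκ⟩ := hcore jC hjCpos hjCl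
  have hCdeg : ∀ v ∈ C jC, m ≤ degIn G v (C jC) := by
    rcases le_or_gt m κ with hmκ | hκm
    · intro v hv
      exact le_trans hmκ (hκ.1 v hv)
    · have hMC : M ⊆ C jC := hκ.2 M (fun v hv => le_trans (le_of_lt hκm) (hMdeg v hv))
      have hMeq : M = C jC := subset_antisymm hMC hCM
      intro v hv
      rw [← hMeq]
      exact hMdeg v (hMeq ▸ hv)
  -- handshake on the C side
  have hCCs : C (jC - 1) ⊂ C jC := hCchain (jC - 1) jC (by omega) hjCl
  have hCC : C (jC - 1) ⊆ C jC := hCCs.subset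
  have hXCne : (C jC \ C (jC - 1)).Nonempty := by
    obtain ⟨x, hx1, hx2⟩ := exists_of_ssubset hCCs
    exact ⟨x, mem_sdiff.mpr ⟨hx1, hx2⟩⟩
  have hdisj : Disjoint (C jC \ C (jC - 1)) (C (jC - 1)) := sdiff_disjoint
  have hXCU : (C jC \ C (jC - 1)) ∪ C (jC - 1) = C jC := by
    rw [union_comm]
    exact union_sdiff_of_subset hCC
  have hhs := handshake G hdisj
  have hsum_lb : m * (C jC \ C (jC - 1)).card
      ≤ ∑ v ∈ C jC \ C (jC - 1), degIn G v ((C jC \ C (jC - 1)) ∪ C (jC - 1)) := by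
    calc m * (C jC \ C (jC - 1)).card = ∑ _v ∈ C jC \ C (jC - 1), m := by
          rw [sum_const, smul_eq_mul, mul_comm]
      _ ≤ _ := by
          apply sum_le_sum
          intro v hv
          rw [hXCU]
          exact hCdeg v ((mem_sdiff.mp hv).1)
  have hkey : m * (C jC \ C (jC - 1)).card ≤ 2 * (margEdges G (C jC \ C (jC - 1)) (C (jC - 1))).card :=
    le_trans hsum_lb hhs
  have hXCpos : (0 : ℚ) < ((C jC \ C (jC - 1)).card : ℚ) := by
    exact_mod_cast card_pos.mpr hXCne
  have hout : outDensity G (C jC) (C (jC - 1))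
      = ((margEdges G (C jC \ C (jC - 1)) (C (jC - 1))).card : ℚ)
        / (((C jC \ C (jC - 1)).card : ℚ)) := by
    rw [outDensity]
  rw [hout]
  rw [div_le_div_iff₀ (by norm_num) hXCpos]
  have hdm : d ≤ (m : ℚ) := Nat.le_ceil d
  have hkeyQ : (m : ℚ) * ((C jC \ C (jC - 1)).card : ℚ)
      ≤ 2 * ((margEdges G (C jC \ C (jC - 1)) (C (jC - 1))).card : ℚ) := by
    exact_mod_cast hkey
  nlinarith [hdm, hkeyQ, hXCpos]
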